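/- Let χ be the tail dependence matrix of a recursive max-weighted model on a DAG D. Then for k ∈ an(i) and j ∈ an(k): χ(j,i) = χ(j,k)·χ(k,i) < min(χ(j,k), χ(k,i)). Consequently, for any directed path [j = k₀ → k₁ → ... → kₙ = i] in D, χ(j,i) = ∏_{ν=0}^{n-1} χ(k_ν, k_{ν+1}). -/

import Mathlib

open Finset
open scoped Classical

/-- `anc E j i`: there is a directed path (length ≥ 1) from `j` to `i`, i.e. `j` is a
strict ancestor of `i` in the directed graph with edge relation `E`. -/
def anc {d : ℕ} (E : Fin d → Fin d → Prop) (j i : Fin d) : Prop :=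
  Relation.TransGen E j i

/-- `Anc E j i`: `j` is an ancestor of `i`, including `j = i`. -/
def Anc {d : ℕ} (E : Fin d → Fin d → Prop) (j i : Fin d) : Prop :=
  j = i ∨ Relation.TransGen E j i

/-- The tail dependence coefficient associated to a (standardized) max-linear
coefficient matrix `B`: `χ(i,j) = ∑_{k ∈ An(i) ∩ An(j)} min (B k i) (B k j)`. -/
noncomputable def tdc {d : ℕ} (E : Fin d → Fin d → Prop)
    (B : Matrix (Fin d) (Fin d) ℝ) (i j : Fin d) : ℝ :=
  ∑ k ∈ Finset.univ.filter (fun k => Anc E k i ∧ Anc E k j), min (B k i) (B k j)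

lemma Anc_trans {d : ℕ} {E : Fin d → Fin d → Prop} {k j i : Fin d}
    (h1 : Anc E k j) (h2 : Anc E j i) : Anc E k i := by
  rcases h1 with rfl | h1
  · exact h2
  · rcases h2 with rfl | h2
    · exact Or.inr h1
    · exact Or.inr (h1.trans h2)

lemma chi_self {d : ℕ} {E : Fin d → Fin d → Prop} {B : Matrix (Fin d) (Fin d) ℝ}
    (hcol : ∀ i, ∑ k ∈ Finset.univ.filter (fun k => Anc E k i), B k i = 1)
    (j : Fin d) : tdc E B j j = 1 := by
  unfold tdc
  rw [← hcol j]
  apply Finset.sum_congr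
  · apply Finset.filter_congr
    intro k _
    simp [and_self]
  · intro k _
    exact min_self _

lemma chi_key {d : ℕ} {E : Fin d → Fin d → Prop}
    (hacyc : ∀ i, ¬ anc E i i)
    {B : Matrix (Fin d) (Fin d) ℝ}
    (hnn : ∀ j i, 0 ≤ B j i)
    (hsgn : ∀ j i, 0 < B j i ↔ Anc E j i)
    (hcol : ∀ i, ∑ k ∈ Finset.univ.filter (fun k => Anc E k i), B k i = 1)
    (hmw : ∀ i k j, anc E k i → anc E j k → B j i = B j k * B k i / B k k)
    {j i : Fin d} (hji : anc E j i) :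
    tdc E B j i = B j i / B j j ∧ B j i < B j j := by
  have hjj : 0 < B j j := (hsgn j j).2 (Or.inl rfl)
  set r := B j i / B j j with hr
  have hA : ∀ k, Anc E k j → B k i = B k j * r := by
    intro k hk
    rcases hk with rfl | hk
    · rw [hr, mul_div_assoc', mul_div_cancel_left₀ _ hjj.ne']
    · rw [hmw i j k hji hk, hr]; ring
  have hsum : ∑ k ∈ Finset.univ.filter (fun k => Anc E k j), B k i = r := by
    rw [Finset.sum_congr rfl (fun k hk => hA k (Finset.mem_filter.mp hk).2),
      ← Finset.sum_mul, hcol j, one_mul]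
  have hrpos : 0 < r := div_pos ((hsgn j i).2 (Or.inr hji)) hjj
  have hsub : insert i (Finset.univ.filter (fun k => Anc E k j)) ⊆
      Finset.univ.filter (fun k => Anc E k i) := by
    intro k hk
    simp only [Finset.mem_insert, Finset.mem_filter, Finset.mem_univ, true_and] at *
    rcases hk with rfl | hk
    · exact Or.inl rfl
    · exact Anc_trans hk (Or.inr hji)
  have hinot : i ∉ Finset.univ.filter (fun k => Anc E k j) := by
    simp only [Finset.mem_filter, Finset.mem_univ, true_and]
    intro h
    rcases h with rfl | h
    · exact hacyc i hji
    · exact hacyc i (h.trans hji)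
  have hle : B i i + r ≤ 1 := by
    have := Finset.sum_le_sum_of_subset_of_nonneg hsub (fun k _ _ => hnn k i)
    rwa [Finset.sum_insert hinot, hsum, hcol i] at this
  have hii : 0 < B i i := (hsgn i i).2 (Or.inl rfl)
  have hrlt : r < 1 := by linarith
  constructor
  · unfold tdc
    have hfe : Finset.univ.filter (fun k => Anc E k j ∧ Anc E k i) =
        Finset.univ.filter (fun k => Anc E k j) := by
      apply Finset.filter_congr
      intro k _
      constructor
      · exact And.left
      · exact fun hk => ⟨hk, Anc_trans hk (Or.inr hji)⟩
    rw [hfe, ← hsum]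
    apply Finset.sum_congr rfl
    intro k hk
    have hk' := (Finset.mem_filter.mp hk).2
    rw [hA k hk', min_eq_right]
    nlinarith [hnn k j]
  · have : B j i = B j j * r := by rw [hr, mul_div_assoc', mul_div_cancel_left₀ _ hjj.ne']
    nlinarith

theorem stmt9 {d : ℕ} (E : Fin d → Fin d → Prop)
    (hacyc : ∀ i, ¬ anc E i i)
    (B : Matrix (Fin d) (Fin d) ℝ)
    (hnn : ∀ j i, 0 ≤ B j i)
    (hsgn : ∀ j i, 0 < B j i ↔ Anc E j i)
    (hcol : ∀ i, ∑ k ∈ Finset.univ.filter (fun k => Anc E k i), B k i = 1)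
    (hmw : ∀ i k j, anc E k i → anc E j k → B j i = B j k * B k i / B k k) :
    (∀ i k j, anc E k i → anc E j k →
      tdc E B j i = tdc E B j k * tdc E B k i ∧
      tdc E B j i < min (tdc E B j k) (tdc E B k i)) ∧
    (∀ (n : ℕ) (p : ℕ → Fin d), (∀ ν < n, E (p ν) (p (ν + 1))) →
      tdc E B (p 0) (p n) = ∏ ν ∈ Finset.range n, tdc E B (p ν) (p (ν + 1))) := by
  have main : ∀ i k j, anc E k i → anc E j k →
      tdc E B j i = tdc E B j k * tdc E B k i ∧
      tdc E B j i < min (tdc E B j k) (tdc E B k i) := by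
    intro i k j hki hjk
    have hji : anc E j i := hjk.trans hki
    obtain ⟨eji, ltji⟩ := chi_key hacyc hnn hsgn hcol hmw hji
    obtain ⟨ejk, ltjk⟩ := chi_key hacyc hnn hsgn hcol hmw hjk
    obtain ⟨eki, ltki⟩ := chi_key hacyc hnn hsgn hcol hmw hki
    have hjj : 0 < B j j := (hsgn j j).2 (Or.inl rfl)
    have hkk : 0 < B k k := (hsgn k k).2 (Or.inl rfl)
    have heq : tdc E B j i = tdc E B j k * tdc E B k i := by
      rw [eji, ejk, eki, hmw i k j hki hjk, div_div, div_mul_div_comm,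
        mul_comm (B k k) (B j j)]
    refine ⟨heq, ?_⟩
    have h1 : 0 < tdc E B j k := by
      rw [ejk]; exact div_pos ((hsgn j k).2 (Or.inr hjk)) hjj
    have h2 : 0 < tdc E B k i := by
      rw [eki]; exact div_pos ((hsgn k i).2 (Or.inr hki)) hkk
    have h3 : tdc E B j k < 1 := by
      rw [ejk]; exact (div_lt_one hjj).2 ltjk
    have h4 : tdc E B k i < 1 := by
      rw [eki]; exact (div_lt_one hkk).2 ltki
    rw [heq, lt_min_iff]
    constructor
    · nlinarith
    · nlinarith
  refine ⟨main, ?_⟩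
  intro n
  induction n with
  | zero =>
    intro p _
    simp [chi_self hcol (p 0)]
  | succ n ih =>
    intro p hp
    have hedge : anc E (p n) (p (n + 1)) :=
      Relation.TransGen.single (hp n (Nat.lt_succ_self n))
    rcases Nat.eq_zero_or_pos n with rfl | hn
    · simp
    · have hpn : anc E (p 0) (p n) := by
        clear ih
        induction n with
        | zero => omega
        | succ m ihm =>
          have hem : E (p m) (p (m + 1)) := hp m (by omega)
          rcases Nat.eq_zero_or_pos m with rfl | hm
          · exact Relation.TransGen.single hem
          · exact (ihm (fun ν hν => hp ν (by omega))
              (Relation.TransGen.single hem) hm).tail hem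
      have := (main (p (n + 1)) (p n) (p 0) hedge hpn).1
      rw [Finset.prod_range_succ, ← ih p (fun ν hν => hp ν (by omega)), this]
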